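/- Let U be an n × n Haar distributed unitary random matrix and fix a positive integer k. Define M_k^n = E(|U_{11}|² |U_{22}|² ⋯ |U_{kk}|²). Then (n!/(n−k)!) · M_k^n → 1 as n → ∞; equivalently, n^k · E(|U_{11}|² ⋯ |U_{kk}|²) → 1. -/

import Mathlib

open MeasureTheory ProbabilityTheory Filter Complex Function

noncomputable instance Matrix.measurableSpace {m n α : Type*} [MeasurableSpace α] :
    MeasurableSpace (Matrix m n α) :=
  (inferInstance : MeasurableSpace (m → n → α))

namespace Stmt13Aux

variable {N : ℕ}

abbrev G (N : ℕ) := ↥(Matrix.unitaryGroup (Fin N) ℂ)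

/-- squared modulus of an entry -/
noncomputable def q (r c : Fin N) (U : G N) : ℝ := ‖(U : Matrix (Fin N) (Fin N) ℂ) r c‖ ^ 2

lemma meas_entry (r c : Fin N) :
    Measurable (fun U : G N => (U : Matrix (Fin N) (Fin N) ℂ) r c) := by
  have h1 : Measurable (fun U : G N => (U : Matrix (Fin N) (Fin N) ℂ)) :=
    measurable_subtype_coe
  exact ((measurable_pi_apply c).comp (measurable_pi_apply r)).comp h1

lemma meas_q (r c : Fin N) : Measurable (q r c) :=
  ((meas_entry r c).norm).pow_const 2

lemma q_nonneg (r c : Fin N) (U : G N) : 0 ≤ q r c U := by rw [q]; positivity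

/-- column sums of squared moduli are 1 -/
lemma col_sum (c : Fin N) (U : G N) : ∑ r, q r c U = 1 := by
  have hU : star (U : Matrix (Fin N) (Fin N) ℂ) * U = 1 := (Unitary.mem_iff.mp U.2).1
  have h := congrFun (congrFun hU c) c
  simp only [Matrix.mul_apply, Matrix.star_apply, Matrix.one_apply_eq] at h
  have h2 : (∑ r, ((Complex.normSq ((U : Matrix (Fin N) (Fin N) ℂ) r c) : ℂ))) = 1 := by
    rw [← h]
    refine Finset.sum_congr rfl (fun r _ => ?_)
    rw [RCLike.star_def, ← Complex.normSq_eq_conj_mul_self]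
  have h3 : ((∑ r, Complex.normSq ((U : Matrix (Fin N) (Fin N) ℂ) r c) : ℝ) : ℂ) = 1 := by
    push_cast; exact h2
  have h4 : (∑ r, Complex.normSq ((U : Matrix (Fin N) (Fin N) ℂ) r c) : ℝ) = 1 :=
    Complex.ofReal_injective (by rw [h3, Complex.ofReal_one])
  rw [← h4]
  refine Finset.sum_congr rfl (fun r _ => ?_)
  rw [q, Complex.sq_norm]

lemma q_le_one (r c : Fin N) (U : G N) : q r c U ≤ 1 := by
  rw [← col_sum c U]
  exact Finset.single_le_sum (fun s _ => q_nonneg s c U) (Finset.mem_univ r)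

lemma meas_mulLeft (V : G N) : Measurable (fun U : G N => V * U) := by
  have : Measurable (fun U : G N =>
      ((V : Matrix (Fin N) (Fin N) ℂ) * (U : Matrix (Fin N) (Fin N) ℂ))) := by
    apply measurable_pi_lambda _ (fun r => measurable_pi_lambda _ (fun c => ?_))
    simp only [Matrix.mul_apply]
    exact Finset.measurable_sum _ (fun s _ => (meas_entry s c).const_mul _)
  exact Measurable.subtype_mk this

variable (μ : Measure (G N)) [IsProbabilityMeasure μ]

lemma int_inv (hinv : ∀ V : G N, Measure.map (fun U => V * U) μ = μ)
    (V : G N) (f : G N → ℝ) (hf : Measurable f) :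
    ∫ U, f (V * U) ∂μ = ∫ U, f U ∂μ := by
  have h := integral_map (μ := μ) (φ := fun U : G N => V * U)
    (meas_mulLeft V).aemeasurable (f := f) hf.aestronglyMeasurable
  rw [hinv V] at h
  exact h.symm

lemma integrable_of_bound (f : G N → ℝ) (hf : Measurable f) (B : ℝ)
    (hb : ∀ U, ‖f U‖ ≤ B) : Integrable f μ :=
  (integrable_const B).mono' hf.aestronglyMeasurable (ae_of_all _ hb)



variable {N : ℕ}

noncomputable def permM (σ : Equiv.Perm (Fin N)) : Matrix (Fin N) (Fin N) ℂ :=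
  fun r s => if σ r = s then 1 else 0

lemma permM_mem (σ : Equiv.Perm (Fin N)) : permM σ ∈ Matrix.unitaryGroup (Fin N) ℂ := by
  rw [Matrix.mem_unitaryGroup_iff]
  ext x y
  simp only [Matrix.mul_apply, Matrix.star_apply, permM, Matrix.one_apply]
  simp only [RCLike.star_def, apply_ite (starRingEnd ℂ), map_one, map_zero, ite_mul, one_mul,
    zero_mul, mul_ite, mul_one, mul_zero]
  rw [Finset.sum_ite_eq (Finset.univ) (σ y) (fun z => if σ x = z then (1:ℂ) else 0)]
  simp only [Finset.mem_univ, if_true]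
  by_cases h : x = y
  · subst h; simp
  · have : ¬ (σ y = σ x) := fun hc => h (σ.injective hc).symm
    simp [h, this]

lemma permM_mul_apply (σ : Equiv.Perm (Fin N)) (U : Matrix (Fin N) (Fin N) ℂ) (x y : Fin N) :
    (permM σ * U) x y = U (σ x) y := by
  simp only [Matrix.mul_apply, permM, ite_mul, one_mul, zero_mul]
  exact Finset.sum_ite_eq Finset.univ (σ x) (fun z => U z y) |>.trans (by simp)



variable {N : ℕ}

noncomputable def d : ℂ := ((Real.sqrt 2 : ℝ) : ℂ)⁻¹

lemma d_conj : (starRingEnd ℂ) d = d := by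
  rw [d, map_inv₀, Complex.conj_ofReal]

lemma d_mul_d : d * d = 1/2 := by
  rw [d, ← mul_inv, ← Complex.ofReal_mul, Real.mul_self_sqrt (by norm_num : (0:ℝ) ≤ 2)]
  norm_num

/-- Givens-type reflection mixing rows r and s with phase ε -/
noncomputable def giv (r s : Fin N) (ε : ℂ) : Matrix (Fin N) (Fin N) ℂ :=
  fun x z =>
    if x = r then (if z = r then d else if z = s then ε * d else 0)
    else if x = s then (if z = r then (starRingEnd ℂ) ε * d else if z = s then -d else 0)
    else (if z = x then 1 else 0)

lemma sum_two {r s : Fin N} (h : r ≠ s) (a b : ℂ) :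
    ∑ z, (if z = r then a else if z = s then b else 0) = a + b := by
  have key : ∀ z : Fin N, (if z = r then a else if z = s then b else 0)
      = (if z = r then a else 0) + (if z = s then b else 0) := by
    intro z
    by_cases h1 : z = r
    · rw [if_pos h1, if_pos h1, if_neg (fun h2 : z = s => h (h1.symm.trans h2)), add_zero]
    · rw [if_neg h1, if_neg h1, zero_add]
  rw [Finset.sum_congr rfl (fun z _ => key z), Finset.sum_add_distrib,
    Finset.sum_ite_eq' Finset.univ r (fun _ => a), Finset.sum_ite_eq' Finset.univ s (fun _ => b)]
  simp

lemma sum_two_mul {r s : Fin N} (h : r ≠ s) (a1 b1 : ℂ) (f : Fin N → ℂ) :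
    ∑ z, (if z = r then a1 else if z = s then b1 else 0) * f z
      = a1 * f r + b1 * f s := by
  have key : ∀ z : Fin N, (if z = r then a1 else if z = s then b1 else 0) * f z
      = (if z = r then a1 * f r else if z = s then b1 * f s else 0) := by
    intro z
    by_cases h1 : z = r
    · rw [if_pos h1, if_pos h1, h1]
    · by_cases h2 : z = s
      · rw [if_neg h1, if_pos h2, if_neg h1, if_pos h2, h2]
      · rw [if_neg h1, if_neg h2, if_neg h1, if_neg h2, zero_mul]
  rw [Finset.sum_congr rfl (fun z _ => key z)]
  exact sum_two h _ _

lemma eps_conj {ε : ℂ} (hε : ‖ε‖ = 1) : ε * (starRingEnd ℂ) ε = 1 := by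
  rw [Complex.mul_conj]
  norm_cast
  rw [Complex.normSq_eq_norm_sq, hε]
  norm_num

section rows
variable {r s : Fin N} {ε : ℂ}

lemma row_r : ∀ z, giv r s ε r z = if z = r then d else if z = s then ε * d else 0 := by
  intro z; simp only [giv, eq_self_iff_true, if_true]

lemma row_s (hrs : r ≠ s) : ∀ z, giv r s ε s z
    = if z = r then (starRingEnd ℂ) ε * d else if z = s then -d else 0 := by
  intro z; simp only [giv, if_neg (Ne.symm hrs), eq_self_iff_true, if_true]

lemma row_o {x : Fin N} (hxr : x ≠ r) (hxs : x ≠ s) :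
    ∀ z, giv r s ε x z = if z = x then 1 else 0 := by
  intro z; simp only [giv, if_neg hxr, if_neg hxs]

lemma giv_mem (hrs : r ≠ s) (hε : ‖ε‖ = 1) : giv r s ε ∈ Matrix.unitaryGroup (Fin N) ℂ := by
  rw [Matrix.mem_unitaryGroup_iff]
  ext x y
  rw [Matrix.mul_apply, Matrix.one_apply]
  have hconj : ∀ z w, star (giv r s ε) z w = (starRingEnd ℂ) (giv r s ε w z) := fun z w => rfl
  simp only [hconj]
  have hdd := d_mul_d
  have hee := eps_conj hε
  by_cases hxr : x = r
  · rw [hxr]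
    rw [Finset.sum_congr rfl (fun z _ => by rw [row_r (s := s) (ε := ε) z]),
      sum_two_mul hrs d (ε * d) (fun z => (starRingEnd ℂ) (giv r s ε y z))]
    by_cases hyr : y = r
    · rw [hyr]
      rw [if_pos rfl, row_r (s := s) (ε := ε) r, row_r (s := s) (ε := ε) s,
        if_pos rfl, if_neg (Ne.symm hrs), if_pos rfl, map_mul, d_conj]
      linear_combination (2:ℂ) * hdd + (d*d) * hee
    · by_cases hys : y = s
      · rw [hys]
        rw [if_neg hrs, row_s hrs r, row_s hrs s, if_pos rfl, if_neg (Ne.symm hrs), if_pos rfl,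
          map_mul, map_neg, d_conj, Complex.conj_conj]
        ring
      · rw [if_neg (fun h : r = y => hyr h.symm),
          row_o (fun h => hyr h) (fun h => hys h) r, row_o (fun h => hyr h) (fun h => hys h) s,
          if_neg (fun h : r = y => hyr h.symm), if_neg (fun h : s = y => hys h.symm),
          map_zero]
        ring
  · by_cases hxs : x = s
    · rw [hxs]
      rw [Finset.sum_congr rfl (fun z _ => by rw [row_s (ε := ε) hrs z]),
        sum_two_mul hrs ((starRingEnd ℂ) ε * d) (-d) (fun z => (starRingEnd ℂ) (giv r s ε y z))]
      by_cases hyr : y = r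
      · rw [hyr]
        rw [if_neg (Ne.symm hrs), row_r (s := s) (ε := ε) r, row_r (s := s) (ε := ε) s,
          if_pos rfl, if_neg (Ne.symm hrs), if_pos rfl, map_mul, d_conj]
        ring
      · by_cases hys : y = s
        · rw [hys]
          rw [if_pos rfl, row_s hrs r, row_s hrs s, if_pos rfl, if_neg (Ne.symm hrs), if_pos rfl,
            map_mul, map_neg, d_conj, Complex.conj_conj]
          linear_combination (2:ℂ) * hdd + (d*d) * hee
        · rw [if_neg (fun h : s = y => hys h.symm),
            row_o (fun h => hyr h) (fun h => hys h) r, row_o (fun h => hyr h) (fun h => hys h) s,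
            if_neg (fun h : r = y => hyr h.symm), if_neg (fun h : s = y => hys h.symm),
            map_zero]
          ring
    · rw [Finset.sum_congr rfl (fun z _ => by
        rw [row_o (fun h => hxr h) (fun h => hxs h) z])]
      have key : ∀ z : Fin N, (if z = x then (1:ℂ) else 0) * (starRingEnd ℂ) (giv r s ε y z)
          = if z = x then (starRingEnd ℂ) (giv r s ε y x) else 0 := by
        intro z
        by_cases hz : z = x
        · rw [if_pos hz, if_pos hz, hz, one_mul]
        · rw [if_neg hz, if_neg hz, zero_mul]
      rw [Finset.sum_congr rfl (fun z _ => key z), Finset.sum_ite_eq' Finset.univ x]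
      simp only [Finset.mem_univ, if_true]
      by_cases hyr : y = r
      · rw [hyr]
        rw [row_r (s := s) (ε := ε) x, if_neg (fun h : x = r => hxr h),
          if_neg (fun h : x = s => hxs h), map_zero, if_neg (fun h : x = r => hxr h)]
      · by_cases hys : y = s
        · rw [hys]
          rw [row_s hrs x, if_neg (fun h : x = r => hxr h),
            if_neg (fun h : x = s => hxs h), map_zero, if_neg (fun h : x = s => hxs h)]
        · rw [row_o (fun h => hyr h) (fun h => hys h) x]
          by_cases hxy : x = y
          · rw [if_pos hxy, map_one]
          · rw [if_neg hxy, map_zero]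

lemma giv_mul_apply_r (hrs : r ≠ s) (U : Matrix (Fin N) (Fin N) ℂ) (y : Fin N) :
    (giv r s ε * U) r y = d * U r y + ε * d * U s y := by
  rw [Matrix.mul_apply,
    Finset.sum_congr rfl (fun z _ => by rw [row_r (s := s) (ε := ε) z]),
    sum_two_mul hrs d (ε * d) (fun z => U z y)]

end rows



lemma exists_perm {k N : ℕ} (c i : Fin k → Fin N) (hc : Injective c) (hi : Injective i) :
    ∃ σ : Equiv.Perm (Fin N), ∀ j, σ (c j) = i j := by
  classical
  let e : {x // x ∈ Set.range c} ≃ {x // x ∈ Set.range i} :=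
    (Equiv.ofInjective c hc).symm.trans (Equiv.ofInjective i hi)
  refine ⟨e.extendSubtype, fun j => ?_⟩
  have hmem : c j ∈ Set.range c := ⟨j, rfl⟩
  rw [Equiv.extendSubtype_apply_of_mem e (c j) hmem]
  have h1 : (Equiv.ofInjective c hc).symm ⟨c j, hmem⟩ = j := by
    rw [Equiv.symm_apply_eq]
    exact Subtype.ext rfl
  simp only [e, Equiv.trans_apply, h1, Equiv.ofInjective_apply]

lemma sub_pow_le_descFactorial (N k : ℕ) : (N - k) ^ k ≤ N.descFactorial k := by
  induction k with
  | zero => simp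
  | succ m ih =>
    rw [Nat.descFactorial_succ, pow_succ, mul_comm]
    exact Nat.mul_le_mul (Nat.sub_le_sub_left (Nat.le_succ m) N)
      (le_trans (Nat.pow_le_pow_left (Nat.sub_le_sub_left (Nat.le_succ m) N) m) ih)


section main
open Finset
variable {N : ℕ} (μ : Measure (G N)) [IsProbabilityMeasure μ]
  {k : ℕ} (c : Fin k → Fin N)

/-- expected product of squared moduli with rows given by `i`, columns by `c` -/
noncomputable def F (i : Fin k → Fin N) : ℝ := ∫ U, ∏ j, q (i j) (c j) U ∂μ

lemma meas_prod (i : Fin k → Fin N) : Measurable fun U : G N => ∏ j, q (i j) (c j) U :=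
  Finset.measurable_prod _ (fun j _ => meas_q _ _)

lemma prod_q_nonneg (i : Fin k → Fin N) (U : G N) : 0 ≤ ∏ j, q (i j) (c j) U :=
  Finset.prod_nonneg fun j _ => q_nonneg _ _ _

lemma prod_q_le_one (i : Fin k → Fin N) (U : G N) : ∏ j, q (i j) (c j) U ≤ 1 :=
  Finset.prod_le_one (fun j _ => q_nonneg _ _ _) (fun j _ => q_le_one _ _ _)

lemma int_prod (i : Fin k → Fin N) :
    Integrable (fun U => ∏ j, q (i j) (c j) U) μ :=
  integrable_of_bound μ _ (meas_prod c i) 1 (fun U => by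
    rw [Real.norm_eq_abs, _root_.abs_of_nonneg (prod_q_nonneg c i U)]
    exact prod_q_le_one c i U)

lemma F_nonneg (i : Fin k → Fin N) : 0 ≤ F μ c i :=
  integral_nonneg (fun U => prod_q_nonneg c i U)

lemma sum_F : ∑ i : Fin k → Fin N, F μ c i = 1 := by
  simp only [F]
  rw [← integral_finset_sum Finset.univ (fun i _ => int_prod μ c i)]
  have hpt : ∀ U : G N, (∑ i : Fin k → Fin N, ∏ j, q (i j) (c j) U) = 1 := by
    intro U
    rw [← Fintype.piFinset_univ]
    have hps := Finset.prod_univ_sum (κ := fun _ : Fin k => Fin N) (fun _ => Finset.univ)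
      (fun j r => q r (c j) U)
    rw [← hps, Finset.prod_congr rfl (fun j _ => col_sum (c j) U)]
    exact Finset.prod_const_one
  rw [integral_congr_ae (ae_of_all μ hpt), integral_const]
  simp

lemma F_perm (i : Fin k → Fin N) (hc : Function.Injective c) (hi : Function.Injective i)
    (hinv : ∀ V : G N, Measure.map (fun U => V * U) μ = μ) :
    F μ c i = F μ c c := by
  obtain ⟨σ, hσ⟩ := exists_perm c i hc hi
  let V : G N := ⟨permM σ, permM_mem σ⟩
  have h := int_inv μ hinv V (fun U => ∏ j, q (c j) (c j) U) (meas_prod c c)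
  have hpt : ∀ U : G N, (∏ j, q (c j) (c j) (V * U)) = ∏ j, q (i j) (c j) U := by
    intro U
    refine Finset.prod_congr rfl (fun j _ => ?_)
    have hco : ((V * U : G N) : Matrix (Fin N) (Fin N) ℂ)
        = permM σ * (U : Matrix (Fin N) (Fin N) ℂ) := rfl
    rw [q, q, hco, permM_mul_apply, hσ j]
  rw [F, F, ← h]
  exact integral_congr_ae (ae_of_all μ (fun U => (hpt U).symm))

end main

section moments
open Finset
variable {N : ℕ} (μ : Measure (G N)) [IsProbabilityMeasure μ]

lemma normSq_d : Complex.normSq d = 1/2 := by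
  rw [d, ← Complex.ofReal_inv, Complex.normSq_ofReal, ← mul_inv,
    Real.mul_self_sqrt (by norm_num : (0:ℝ) ≤ 2)]
  norm_num

lemma norm_sq_scaled (ε a b : ℂ) :
    ‖d * a + ε * d * b‖ ^ 2 = 1/2 * Complex.normSq (a + ε * b) := by
  have h : d * a + ε * d * b = d * (a + ε * b) := by ring
  rw [h, Complex.sq_norm, map_mul, normSq_d]

lemma sum_four (a b : ℂ) :
    (‖d * a + 1 * d * b‖ ^ 2) ^ 2 + (‖d * a + Complex.I * d * b‖ ^ 2) ^ 2
      + (‖d * a + (-1) * d * b‖ ^ 2) ^ 2 + (‖d * a + (-Complex.I) * d * b‖ ^ 2) ^ 2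
      = (‖a‖ ^ 2) ^ 2 + (‖b‖ ^ 2) ^ 2 + 4 * (‖a‖ ^ 2 * ‖b‖ ^ 2) := by
  rw [norm_sq_scaled, norm_sq_scaled, norm_sq_scaled, norm_sq_scaled]
  simp only [Complex.sq_norm]
  simp only [Complex.normSq_apply, Complex.add_re, Complex.add_im, Complex.mul_re,
    Complex.mul_im, Complex.I_re, Complex.I_im, Complex.neg_re, Complex.neg_im,
    Complex.one_re, Complex.one_im]
  ring

lemma int_q_sq_eq (hinv : ∀ V : G N, Measure.map (fun U => V * U) μ = μ)
    (c0 : Fin N) (r1 r2 : Fin N) :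
    ∫ U, (q r1 c0 U)^2 ∂μ = ∫ U, (q r2 c0 U)^2 ∂μ := by
  let σ := Equiv.swap r2 r1
  let V : G N := ⟨permM σ, permM_mem σ⟩
  have h := int_inv μ hinv V (fun U => (q r2 c0 U)^2) ((meas_q r2 c0).pow_const 2)
  rw [← h]
  refine integral_congr_ae (ae_of_all μ (fun U => ?_))
  have hco : ((V * U : G N) : Matrix (Fin N) (Fin N) ℂ)
      = permM σ * (U : Matrix (Fin N) (Fin N) ℂ) := rfl
  simp only [q, hco, permM_mul_apply]
  rw [Equiv.swap_apply_left]

lemma integrable_q_sq (r1 c0 : Fin N) : Integrable (fun U => (q r1 c0 U)^2) μ :=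
  integrable_of_bound μ _ ((meas_q r1 c0).pow_const 2) 1 (fun U => by
    rw [Real.norm_eq_abs, _root_.abs_of_nonneg (by positivity)]
    calc (q r1 c0 U)^2 ≤ 1^2 := pow_le_pow_left₀ (q_nonneg _ _ _) (q_le_one _ _ _) 2
      _ = 1 := one_pow 2)

lemma integrable_q_mul (r1 r2 c1 c2 : Fin N) :
    Integrable (fun U => q r1 c1 U * q r2 c2 U) μ :=
  integrable_of_bound μ _ ((meas_q r1 c1).mul (meas_q r2 c2)) 1 (fun U => by
    rw [Real.norm_eq_abs, _root_.abs_of_nonneg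
      (mul_nonneg (q_nonneg _ _ _) (q_nonneg _ _ _))]
    calc q r1 c1 U * q r2 c2 U ≤ 1 * 1 :=
          mul_le_mul (q_le_one _ _ _) (q_le_one _ _ _) (q_nonneg _ _ _) zero_le_one
      _ = 1 := one_mul 1)

noncomputable def eps : Fin 4 → ℂ := ![1, Complex.I, -1, -Complex.I]

lemma eps_norm : ∀ j : Fin 4, ‖eps j‖ = 1 := by
  intro j
  fin_cases j <;> simp [eps]

lemma pair_moment (hinv : ∀ V : G N, Measure.map (fun U => V * U) μ = μ)
    (c0 : Fin N) (r1 r2 : Fin N) (hrs : r1 ≠ r2) :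
    ∫ U, q r1 c0 U * q r2 c0 U ∂μ = (∫ U, (q r1 c0 U)^2 ∂μ) / 2 := by
  set t := ∫ U, (q r1 c0 U)^2 ∂μ with ht
  have key : ∀ (ε : ℂ), ‖ε‖ = 1 →
      ∫ U, (‖d * (U : Matrix (Fin N) (Fin N) ℂ) r1 c0
        + ε * d * (U : Matrix (Fin N) (Fin N) ℂ) r2 c0‖ ^ 2) ^ 2 ∂μ = t := by
    intro ε hε
    let V : G N := ⟨giv r1 r2 ε, giv_mem hrs hε⟩
    have h := int_inv μ hinv V (fun U => (q r1 c0 U)^2) ((meas_q r1 c0).pow_const 2)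
    rw [ht, ← h]
    refine integral_congr_ae (ae_of_all μ (fun U => ?_))
    have hco : ((V * U : G N) : Matrix (Fin N) (Fin N) ℂ)
        = giv r1 r2 ε * (U : Matrix (Fin N) (Fin N) ℂ) := rfl
    simp only [q, hco]
    rw [giv_mul_apply_r hrs]
  have meas4 : ∀ (ε : ℂ), Measurable (fun U : G N =>
      (‖d * (U : Matrix (Fin N) (Fin N) ℂ) r1 c0
        + ε * d * (U : Matrix (Fin N) (Fin N) ℂ) r2 c0‖ ^ 2) ^ 2) := by
    intro ε
    exact ((((meas_entry r1 c0).const_mul d).add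
      ((meas_entry r2 c0).const_mul (ε * d))).norm.pow_const 2).pow_const 2
  have int4 : ∀ (ε : ℂ), ‖ε‖ = 1 → Integrable (fun U : G N =>
      (‖d * (U : Matrix (Fin N) (Fin N) ℂ) r1 c0
        + ε * d * (U : Matrix (Fin N) (Fin N) ℂ) r2 c0‖ ^ 2) ^ 2) μ := by
    intro ε hε
    refine integrable_of_bound μ _ (meas4 ε) 1 (fun U => ?_)
    let V : G N := ⟨giv r1 r2 ε, giv_mem hrs hε⟩
    have hco : ((V * U : G N) : Matrix (Fin N) (Fin N) ℂ)
        = giv r1 r2 ε * (U : Matrix (Fin N) (Fin N) ℂ) := rfl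
    have hq : ‖d * (U : Matrix (Fin N) (Fin N) ℂ) r1 c0
        + ε * d * (U : Matrix (Fin N) (Fin N) ℂ) r2 c0‖ ^ 2 = q r1 c0 (V * U) := by
      simp only [q, hco]; rw [giv_mul_apply_r hrs]
    rw [Real.norm_eq_abs, _root_.abs_of_nonneg (by positivity), hq]
    calc (q r1 c0 (V*U))^2 ≤ 1^2 :=
          pow_le_pow_left₀ (q_nonneg _ _ _) (q_le_one _ _ _) 2
      _ = 1 := one_pow 2
  have hsum4 : ∫ U, (∑ j : Fin 4, (‖d * (U : Matrix (Fin N) (Fin N) ℂ) r1 c0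
        + eps j * d * (U : Matrix (Fin N) (Fin N) ℂ) r2 c0‖ ^ 2) ^ 2) ∂μ = 4 * t := by
    rw [integral_finset_sum Finset.univ (fun j _ => int4 (eps j) (eps_norm j)),
      Finset.sum_congr rfl (fun j _ => key (eps j) (eps_norm j))]
    simp [Finset.sum_const]
  have hpt : ∀ U : G N, (∑ j : Fin 4, (‖d * (U : Matrix (Fin N) (Fin N) ℂ) r1 c0
        + eps j * d * (U : Matrix (Fin N) (Fin N) ℂ) r2 c0‖ ^ 2) ^ 2)
      = (q r1 c0 U)^2 + (q r2 c0 U)^2 + 4 * (q r1 c0 U * q r2 c0 U) := by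
    intro U
    rw [Fin.sum_univ_four]
    have h0 : eps 0 = 1 := rfl
    have h1 : eps 1 = Complex.I := rfl
    have h2 : eps 2 = -1 := rfl
    have h3 : eps 3 = -Complex.I := rfl
    rw [h0, h1, h2, h3, sum_four]
    simp only [q]
  rw [integral_congr_ae (ae_of_all μ hpt)] at hsum4
  have iA : Integrable (fun U : G N => (q r1 c0 U)^2 + (q r2 c0 U)^2) μ := by
    exact (integrable_q_sq μ r1 c0).add (integrable_q_sq μ r2 c0)
  have iB : Integrable (fun U : G N => 4 * (q r1 c0 U * q r2 c0 U)) μ := by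
    exact (integrable_q_mul μ r1 r2 c0 c0).const_mul 4
  rw [integral_add iA iB, integral_add (integrable_q_sq μ r1 c0) (integrable_q_sq μ r2 c0),
    integral_const_mul] at hsum4
  have ht2 : ∫ U, (q r2 c0 U)^2 ∂μ = t := int_q_sq_eq μ hinv c0 r2 r1
  rw [ht2] at hsum4
  linarith

lemma q_sq_moment_le (hinv : ∀ V : G N, Measure.map (fun U => V * U) μ = μ)
    (hN : 2 ≤ N) (r : Fin N) (c0 : Fin N) :
    ∫ U, (q r c0 U)^2 ∂μ ≤ 2 / (N:ℝ)^2 := by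
  set t := ∫ U, (q r c0 U)^2 ∂μ with ht
  -- total sum identity
  have hpt : ∀ U : G N, (∑ r1 : Fin N, ∑ r2 : Fin N, q r1 c0 U * q r2 c0 U) = 1 := by
    intro U
    rw [← Finset.sum_mul_sum Finset.univ Finset.univ (fun r1 => q r1 c0 U)
      (fun r2 => q r2 c0 U), col_sum, one_mul]
  have htot : ∑ r1 : Fin N, ∑ r2 : Fin N, (∫ U, q r1 c0 U * q r2 c0 U ∂μ) = 1 := by
    calc ∑ r1 : Fin N, ∑ r2 : Fin N, (∫ U, q r1 c0 U * q r2 c0 U ∂μ)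
        = ∑ r1 : Fin N, ∫ U, (∑ r2 : Fin N, q r1 c0 U * q r2 c0 U) ∂μ :=
          Finset.sum_congr rfl (fun r1 _ => (integral_finset_sum Finset.univ
            (fun r2 _ => integrable_q_mul μ r1 r2 c0 c0)).symm)
      _ = ∫ U, (∑ r1 : Fin N, ∑ r2 : Fin N, q r1 c0 U * q r2 c0 U) ∂μ :=
          (integral_finset_sum Finset.univ (fun r1 _ =>
            integrable_finset_sum Finset.univ (fun r2 _ => integrable_q_mul μ r1 r2 c0 c0))).symm
      _ = 1 := by rw [integral_congr_ae (ae_of_all μ hpt), integral_const]; simp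
  -- evaluate each term
  have heval : ∀ r1 r2 : Fin N, (∫ U, q r1 c0 U * q r2 c0 U ∂μ)
      = if r1 = r2 then t else t / 2 := by
    intro r1 r2
    by_cases h : r1 = r2
    · rw [if_pos h, ← h]
      have hmulsq : ∫ U, q r1 c0 U * q r1 c0 U ∂μ = ∫ U, (q r1 c0 U)^2 ∂μ :=
        integral_congr_ae (ae_of_all μ (fun U => (pow_two (q r1 c0 U)).symm))
      rw [hmulsq, ht]
      exact int_q_sq_eq μ hinv c0 r1 r
    · rw [if_neg h, pair_moment μ hinv c0 r1 r2 h, int_q_sq_eq μ hinv c0 r1 r]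
  rw [Finset.sum_congr rfl (fun r1 _ => Finset.sum_congr rfl
    (fun r2 _ => heval r1 r2))] at htot
  have hdiag : ∀ r1 : Fin N, (∑ r2 : Fin N, if r1 = r2 then t else t / 2)
      = t + ((N:ℝ) - 1) * (t/2) := by
    intro r1
    have : ∀ r2 : Fin N, (if r1 = r2 then t else t/2) = (if r2 = r1 then t - t/2 else 0) + t/2 := by
      intro r2
      by_cases h : r2 = r1
      · rw [if_pos h.symm, if_pos h]; ring
      · rw [if_neg (fun hh : r1 = r2 => h hh.symm), if_neg h, zero_add]
    rw [Finset.sum_congr rfl (fun r2 _ => this r2), Finset.sum_add_distrib,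
      Finset.sum_ite_eq' Finset.univ r1 (fun _ => t - t/2)]
    simp only [Finset.mem_univ, if_true, Finset.sum_const, Finset.card_univ, Fintype.card_fin,
      nsmul_eq_mul]
    ring
  rw [Finset.sum_congr rfl (fun r1 _ => hdiag r1), Finset.sum_const, Finset.card_univ,
    Fintype.card_fin, nsmul_eq_mul] at htot
  have htnn : 0 ≤ t := integral_nonneg (fun U => sq_nonneg _)
  have hN' : (2:ℝ) ≤ (N:ℝ) := by exact_mod_cast hN
  have hNpos : (0:ℝ) < (N:ℝ) := by linarith
  rw [le_div_iff₀ (by positivity : (0:ℝ) < (N:ℝ)^2)]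
  nlinarith [htot, htnn, hNpos, mul_nonneg htnn hNpos.le]

lemma q_mul_moment_le (hinv : ∀ V : G N, Measure.map (fun U => V * U) μ = μ)
    (hN : 2 ≤ N) (r : Fin N) (c1 c2 : Fin N) :
    ∫ U, q r c1 U * q r c2 U ∂μ ≤ 2 / (N:ℝ)^2 := by
  have hpt : ∀ U : G N, q r c1 U * q r c2 U ≤ ((q r c1 U)^2 + (q r c2 U)^2) / 2 := by
    intro U
    nlinarith [sq_nonneg (q r c1 U - q r c2 U)]
  have h1 : ∫ U, q r c1 U * q r c2 U ∂μ
      ≤ ∫ U, ((q r c1 U)^2 + (q r c2 U)^2) / 2 ∂μ := by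
    refine integral_mono (integrable_q_mul μ r r c1 c2) ?_ hpt
    exact ((integrable_q_sq μ r c1).add (integrable_q_sq μ r c2)).div_const 2
  have h2 : ∫ U, ((q r c1 U)^2 + (q r c2 U)^2) / 2 ∂μ
      = ((∫ U, (q r c1 U)^2 ∂μ) + (∫ U, (q r c2 U)^2 ∂μ)) / 2 := by
    rw [integral_div, integral_add (integrable_q_sq μ r c1) (integrable_q_sq μ r c2)]
  have h3 := q_sq_moment_le μ hinv hN r c1
  have h4 := q_sq_moment_le μ hinv hN r c2
  rw [h2] at h1
  linarith

end moments

section noninj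
open Finset
variable {N : ℕ} (μ : Measure (G N)) [IsProbabilityMeasure μ]
  {k : ℕ} (c : Fin k → Fin N)

lemma constrained_sum (U : G N) (j0 j1 : Fin k) (hj : j0 ≠ j1) :
    ∑ i ∈ Finset.univ.filter (fun i : Fin k → Fin N => i j1 = i j0), ∏ j, q (i j) (c j) U
      = ∑ r, q r (c j0) U * q r (c j1) U := by
  classical
  rw [Finset.sum_filter]
  set e := Equiv.piSplitAt j1 (fun _ : Fin k => Fin N) with he
  have hsum := Fintype.sum_equiv e
    (fun i : Fin k → Fin N => if i j1 = i j0 then ∏ j, q (i j) (c j) U else 0)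
    (fun p => if (e.symm p) j1 = (e.symm p) j0 then ∏ j, q ((e.symm p) j) (c j) U else 0)
    (fun i => by simp only [Equiv.symm_apply_apply])
  rw [hsum, Fintype.sum_prod_type, Finset.sum_comm]
  have hat : ∀ (x : Fin N) (h : (j : {j : Fin k // j ≠ j1}) → Fin N),
      (e.symm (x, h)) j1 = x := by
    intro x h
    rw [he, Equiv.piSplitAt_symm_apply, dif_pos rfl]
  have hne : ∀ (x : Fin N) (h : (j : {j : Fin k // j ≠ j1}) → Fin N) (j : Fin k) (hjj : j ≠ j1),
      (e.symm (x, h)) j = h ⟨j, hjj⟩ := by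
    intro x h j hjj
    rw [he, Equiv.piSplitAt_symm_apply, dif_neg hjj]
  have step1 : ∀ (h : (j : {j : Fin k // j ≠ j1}) → Fin N),
      (∑ x : Fin N, if (e.symm (x, h)) j1 = (e.symm (x, h)) j0
        then ∏ j, q ((e.symm (x, h)) j) (c j) U else 0)
      = ∏ j, q ((e.symm (h ⟨j0, hj⟩, h)) j) (c j) U := by
    intro h
    have hc1 : ∀ x : Fin N, ((e.symm (x, h)) j1 = (e.symm (x, h)) j0) ↔ (x = h ⟨j0, hj⟩) := by
      intro x
      rw [hat x h, hne x h j0 hj]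
    have : ∀ x : Fin N, (if (e.symm (x, h)) j1 = (e.symm (x, h)) j0
        then ∏ j, q ((e.symm (x, h)) j) (c j) U else 0)
        = (if x = h ⟨j0, hj⟩ then ∏ j, q ((e.symm (h ⟨j0, hj⟩, h)) j) (c j) U else 0) := by
      intro x
      by_cases hx : x = h ⟨j0, hj⟩
      · rw [if_pos ((hc1 x).mpr hx), if_pos hx, hx]
      · rw [if_neg (fun hcc => hx ((hc1 x).mp hcc)), if_neg hx]
    rw [Finset.sum_congr rfl (fun x _ => this x), Finset.sum_ite_eq' Finset.univ (h ⟨j0, hj⟩)]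
    simp
  rw [Finset.sum_congr rfl (fun h _ => step1 h)]
  -- now evaluate the product for each h and factor through prod over subtype
  have step2 : ∀ (h : (j : {j : Fin k // j ≠ j1}) → Fin N),
      (∏ j, q ((e.symm (h ⟨j0, hj⟩, h)) j) (c j) U)
      = ∏ t : {j : Fin k // j ≠ j1},
          (if t = ⟨j0, hj⟩ then q (h t) (c j0) U * q (h t) (c j1) U else q (h t) (c t.1) U) := by
    intro h
    have hsplit : (∏ j, q ((e.symm (h ⟨j0, hj⟩, h)) j) (c j) U)
        = q ((e.symm (h ⟨j0, hj⟩, h)) j1) (c j1) U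
          * ∏ j ∈ Finset.univ.erase j1, q ((e.symm (h ⟨j0, hj⟩, h)) j) (c j) U :=
      (Finset.mul_prod_erase Finset.univ _ (Finset.mem_univ j1)).symm
    rw [hsplit, hat]
    have hsub : (∏ j ∈ Finset.univ.erase j1, q ((e.symm (h ⟨j0, hj⟩, h)) j) (c j) U)
        = ∏ t : {j : Fin k // j ≠ j1}, q ((e.symm (h ⟨j0, hj⟩, h)) t.1) (c t.1) U := by
      apply Finset.prod_subtype
      intro j
      simp [Finset.mem_erase]
    rw [hsub]
    have hval : ∀ t : {j : Fin k // j ≠ j1}, q ((e.symm (h ⟨j0, hj⟩, h)) t.1) (c t.1) U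
        = q (h t) (c t.1) U := by
      intro t
      rw [hne _ h t.1 t.2]
    rw [Finset.prod_congr rfl (fun t _ => hval t)]
    -- reassemble : q (h j0T) (c j1) * ∏_t q (h t) (c t) = ∏_t G t (h t)
    have hR : (∏ t : {j : Fin k // j ≠ j1},
          (if t = ⟨j0, hj⟩ then q (h t) (c j0) U * q (h t) (c j1) U else q (h t) (c t.1) U))
        = (q (h ⟨j0, hj⟩) (c j0) U * q (h ⟨j0, hj⟩) (c j1) U)
          * ∏ t ∈ Finset.univ.erase ⟨j0, hj⟩,
              (if t = ⟨j0, hj⟩ then q (h t) (c j0) U * q (h t) (c j1) U else q (h t) (c t.1) U) := by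
      rw [← Finset.mul_prod_erase Finset.univ _ (Finset.mem_univ ⟨j0, hj⟩), if_pos rfl]
    have hL : (∏ t : {j : Fin k // j ≠ j1}, q (h t) (c t.1) U)
        = q (h ⟨j0, hj⟩) (c j0) U * ∏ t ∈ Finset.univ.erase ⟨j0, hj⟩, q (h t) (c t.1) U := by
      rw [← Finset.mul_prod_erase Finset.univ _ (Finset.mem_univ (⟨j0, hj⟩ : {j // j ≠ j1}))]
    have herase : (∏ t ∈ Finset.univ.erase ⟨j0, hj⟩,
          (if t = ⟨j0, hj⟩ then q (h t) (c j0) U * q (h t) (c j1) U else q (h t) (c t.1) U))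
        = ∏ t ∈ Finset.univ.erase ⟨j0, hj⟩, q (h t) (c t.1) U := by
      refine Finset.prod_congr rfl (fun t ht => ?_)
      rw [if_neg (Finset.ne_of_mem_erase ht)]
    rw [hR, herase, hL]
    ring
  rw [Finset.sum_congr rfl (fun h _ => step2 h)]
  -- factor the sum over functions as a product of sums
  rw [← Fintype.piFinset_univ]
  have hps := Finset.prod_univ_sum (κ := fun _ : {j : Fin k // j ≠ j1} => Fin N)
    (fun _ => Finset.univ)
    (fun t r => if t = ⟨j0, hj⟩ then q r (c j0) U * q r (c j1) U else q r (c t.1) U)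
  rw [← hps]
  -- the product over t has all factors 1 except t = j0
  have : (∏ t : {j : Fin k // j ≠ j1}, ∑ r : Fin N,
      (if t = ⟨j0, hj⟩ then q r (c j0) U * q r (c j1) U else q r (c t.1) U))
      = ∑ r : Fin N, q r (c j0) U * q r (c j1) U := by
    rw [Finset.prod_eq_single_of_mem ⟨j0, hj⟩ (Finset.mem_univ _)]
    · rw [Finset.sum_congr rfl (fun r _ => by rw [if_pos rfl])]
    · intro t _ htne
      rw [Finset.sum_congr rfl (fun r _ => by rw [if_neg htne]), col_sum]
  rw [this]

lemma pair_filter_sum_le (hinv : ∀ V : G N, Measure.map (fun U => V * U) μ = μ)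
    (hN : 2 ≤ N) (j0 j1 : Fin k) (hj : j0 ≠ j1) :
    ∑ i ∈ Finset.univ.filter (fun i : Fin k → Fin N => i j1 = i j0), F μ c i ≤ 2 / (N:ℝ) := by
  have hNpos : (0:ℝ) < (N:ℝ) := by
    have : (2:ℝ) ≤ (N:ℝ) := by exact_mod_cast hN
    linarith
  calc ∑ i ∈ Finset.univ.filter (fun i : Fin k → Fin N => i j1 = i j0), F μ c i
      = ∫ U, (∑ i ∈ Finset.univ.filter (fun i : Fin k → Fin N => i j1 = i j0),
          ∏ j, q (i j) (c j) U) ∂μ :=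
        (integral_finset_sum _ (fun i _ => int_prod μ c i)).symm
    _ = ∫ U, (∑ r, q r (c j0) U * q r (c j1) U) ∂μ :=
        integral_congr_ae (ae_of_all μ (fun U => constrained_sum c U j0 j1 hj))
    _ = ∑ r : Fin N, ∫ U, q r (c j0) U * q r (c j1) U ∂μ :=
        integral_finset_sum _ (fun r _ => integrable_q_mul μ r r (c j0) (c j1))
    _ ≤ ∑ r : Fin N, 2 / (N:ℝ)^2 :=
        Finset.sum_le_sum (fun r _ => q_mul_moment_le μ hinv hN r (c j0) (c j1))
    _ = (N:ℝ) * (2 / (N:ℝ)^2) := by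
        rw [Finset.sum_const, Finset.card_univ, Fintype.card_fin, nsmul_eq_mul]
    _ = 2 / (N:ℝ) := by field_simp

lemma noninj_sum_le (hinv : ∀ V : G N, Measure.map (fun U => V * U) μ = μ) (hN : 2 ≤ N) :
    ∑ i ∈ Finset.univ.filter (fun i : Fin k → Fin N => ¬ Function.Injective i), F μ c i
      ≤ (k * k : ℝ) * (2 / (N:ℝ)) := by
  classical
  set pairs : Finset (Fin k × Fin k) := Finset.univ.filter (fun p => p.1 ≠ p.2) with hp
  have hnn : ∀ (i : Fin k → Fin N) (p : Fin k × Fin k),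
      0 ≤ (if i p.2 = i p.1 then F μ c i else 0) := by
    intro i p
    by_cases h : i p.2 = i p.1
    · rw [if_pos h]; exact F_nonneg μ c i
    · rw [if_neg h]
  have step1 : ∀ i : Fin k → Fin N, ¬ Function.Injective i →
      F μ c i ≤ ∑ p ∈ pairs, (if i p.2 = i p.1 then F μ c i else 0) := by
    intro i hi
    rw [Function.Injective] at hi
    push_neg at hi
    obtain ⟨a, b, hab, hne⟩ := hi
    have hmem : (a, b) ∈ pairs := by simp [hp, hne]
    have hle := Finset.single_le_sum (f := fun p : Fin k × Fin k =>
      (if i p.2 = i p.1 then F μ c i else 0)) (fun p _ => hnn i p) hmem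
    simpa [hab.symm] using hle
  calc ∑ i ∈ Finset.univ.filter (fun i : Fin k → Fin N => ¬ Function.Injective i), F μ c i
      ≤ ∑ i ∈ Finset.univ.filter (fun i : Fin k → Fin N => ¬ Function.Injective i),
          ∑ p ∈ pairs, (if i p.2 = i p.1 then F μ c i else 0) :=
        Finset.sum_le_sum (fun i hi => step1 i (Finset.mem_filter.mp hi).2)
    _ ≤ ∑ i : Fin k → Fin N, ∑ p ∈ pairs, (if i p.2 = i p.1 then F μ c i else 0) :=
        Finset.sum_le_sum_of_subset_of_nonneg (Finset.filter_subset _ _)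
          (fun i _ _ => Finset.sum_nonneg (fun p _ => hnn i p))
    _ = ∑ p ∈ pairs, ∑ i : Fin k → Fin N, (if i p.2 = i p.1 then F μ c i else 0) :=
        Finset.sum_comm
    _ ≤ ∑ p ∈ pairs, 2 / (N:ℝ) := by
        refine Finset.sum_le_sum (fun p hpmem => ?_)
        have hne : p.1 ≠ p.2 := (Finset.mem_filter.mp hpmem).2
        rw [← Finset.sum_filter]
        exact pair_filter_sum_le μ c hinv hN p.1 p.2 hne
    _ = (pairs.card : ℝ) * (2 / (N:ℝ)) := by rw [Finset.sum_const, nsmul_eq_mul]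
    _ ≤ (k * k : ℝ) * (2 / (N:ℝ)) := by
        have hcard : pairs.card ≤ k * k := by
          calc pairs.card ≤ (Finset.univ : Finset (Fin k × Fin k)).card :=
                Finset.card_filter_le _ _
            _ = k * k := by rw [Finset.card_univ, Fintype.card_prod, Fintype.card_fin]
        have h2N : (0:ℝ) ≤ 2 / (N:ℝ) := by positivity
        have : (pairs.card : ℝ) ≤ (k*k : ℝ) := by exact_mod_cast hcard
        exact mul_le_mul_of_nonneg_right this h2N

end noninj

section cardinj
open Finset
variable {N k : ℕ}

lemma card_inj_filter [DecidablePred (Function.Injective : (Fin k → Fin N) → Prop)] :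
    (Finset.univ.filter (fun i : Fin k → Fin N => Function.Injective i)).card
      = N.descFactorial k := by
  rw [← Fintype.card_subtype,
    Fintype.card_congr (Equiv.subtypeInjectiveEquivEmbedding (Fin k) (Fin N)),
    Fintype.card_embedding_eq, Fintype.card_fin, Fintype.card_fin]

end cardinj
end Stmt13Aux

open Stmt13Aux in
/-- For Haar unitary random matrices (the Haar measure `μ n` being the left-invariant Borel
probability measure on the `n × n` unitary group) and a fixed positive integer `k`,
`n^k · M_k^n = n^k · E(|U₁₁|² ⋯ |U_kk|²) → 1` as `n → ∞` (the matrix size `n + k` tends to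
infinity with the diagonal entries indexed by the first `k` coordinates). -/
theorem stmt13 (μ : ∀ n : ℕ, Measure ↥(Matrix.unitaryGroup (Fin n) ℂ))
    (hprob : ∀ n, IsProbabilityMeasure (μ n))
    (hinv : ∀ n (V : ↥(Matrix.unitaryGroup (Fin n) ℂ)),
      Measure.map (fun U => V * U) (μ n) = μ n)
    (k : ℕ) (hk : 0 < k) :
    Tendsto
      (fun n : ℕ => ((n + k : ℕ) : ℝ) ^ k *
        ∫ U : ↥(Matrix.unitaryGroup (Fin (n + k)) ℂ),
          ∏ i : Fin k,
            ‖(U : Matrix (Fin (n + k)) (Fin (n + k)) ℂ)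
                (Fin.castLE (Nat.le_add_left k n) i)
                (Fin.castLE (Nat.le_add_left k n) i)‖ ^ 2 ∂(μ (n + k)))
      atTop (nhds 1) := by
  have key : ∀ n : ℕ, 1 ≤ n →
      (1 - 2 * ((k:ℝ) * k) / ((n:ℝ) + k) ≤ ((n + k : ℕ) : ℝ) ^ k *
        ∫ U : ↥(Matrix.unitaryGroup (Fin (n + k)) ℂ),
          ∏ i : Fin k,
            ‖(U : Matrix (Fin (n + k)) (Fin (n + k)) ℂ)
                (Fin.castLE (Nat.le_add_left k n) i)
                (Fin.castLE (Nat.le_add_left k n) i)‖ ^ 2 ∂(μ (n + k)))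
      ∧ (((n + k : ℕ) : ℝ) ^ k *
        ∫ U : ↥(Matrix.unitaryGroup (Fin (n + k)) ℂ),
          ∏ i : Fin k,
            ‖(U : Matrix (Fin (n + k)) (Fin (n + k)) ℂ)
                (Fin.castLE (Nat.le_add_left k n) i)
                (Fin.castLE (Nat.le_add_left k n) i)‖ ^ 2 ∂(μ (n + k)))
          ≤ (1 + (k:ℝ) / n) ^ k := by
    intro n hn
    haveI := hprob (n + k)
    set N := n + k with hN
    set c : Fin k → Fin N := Fin.castLE (Nat.le_add_left k n) with hcdef
    have hc : Function.Injective c := Fin.castLE_injective _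
    have hN2 : 2 ≤ N := by omega
    have hAeq : (∫ U : ↥(Matrix.unitaryGroup (Fin N) ℂ),
        ∏ i : Fin k, ‖(U : Matrix (Fin N) (Fin N) ℂ) (c i) (c i)‖ ^ 2 ∂(μ N))
        = F (μ N) c c := rfl
    rw [hAeq]
    set A := F (μ N) c c with hA
    have hA0 : 0 ≤ A := F_nonneg (μ N) c c
    have hsplit := Finset.sum_filter_add_sum_filter_not Finset.univ
      (fun i : Fin k → Fin N => Function.Injective i) (F (μ N) c)
    rw [sum_F (μ N) c] at hsplit
    have hinjsum : (∑ i ∈ Finset.univ.filter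
        (fun i : Fin k → Fin N => Function.Injective i), F (μ N) c i)
        = ((N.descFactorial k : ℝ)) * A := by
      rw [Finset.sum_congr rfl (fun i hi =>
        F_perm (μ N) c i hc (Finset.mem_filter.mp hi).2 (hinv N))]
      rw [Finset.sum_const, nsmul_eq_mul, card_inj_filter]
    rw [hinjsum] at hsplit
    have hE0 : 0 ≤ ∑ i ∈ Finset.univ.filter
        (fun i : Fin k → Fin N => ¬ Function.Injective i), F (μ N) c i :=
      Finset.sum_nonneg (fun i _ => F_nonneg (μ N) c i)
    have hE1 := noninj_sum_le (μ N) c (hinv N) hN2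
    have hd1 : (N.descFactorial k : ℝ) ≤ (N:ℝ)^k := by
      exact_mod_cast Nat.descFactorial_le_pow N k
    have hd2 : ((n:ℝ))^k ≤ (N.descFactorial k : ℝ) := by
      have hle := sub_pow_le_descFactorial N k
      have hnk : N - k = n := by omega
      rw [hnk] at hle
      exact_mod_cast hle
    have hnpos : (0:ℝ) < (n:ℝ) := by exact_mod_cast hn
    have hNr : ((N:ℕ):ℝ) = (n:ℝ) + (k:ℝ) := by rw [hN]; push_cast; ring
    have hNpos : (0:ℝ) < (N:ℝ) := by rw [hNr]; positivity
    constructor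
    · -- lower bound
      have l1 : (N.descFactorial k : ℝ) * A ≤ (N:ℝ)^k * A :=
        mul_le_mul_of_nonneg_right hd1 hA0
      have l2 : 1 - ((k:ℝ) * k) * (2 / (N:ℝ)) ≤ (N.descFactorial k : ℝ) * A := by
        linarith [hE1, hsplit]
      rw [← hNr]
      have hcalc : 2 * ((k:ℝ) * k) / (N:ℝ) = ((k:ℝ) * k) * (2 / (N:ℝ)) := by ring
      linarith [l1, l2]
    · -- upper bound
      have u1 : (n:ℝ)^k * A ≤ (N.descFactorial k : ℝ) * A :=
        mul_le_mul_of_nonneg_right hd2 hA0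
      have u2 : (N.descFactorial k : ℝ) * A ≤ 1 := by linarith [hE0, hsplit]
      have u3 : A ≤ 1 / (n:ℝ)^k := by
        rw [le_div_iff₀ (by positivity : (0:ℝ) < (n:ℝ)^k)]
        calc A * (n:ℝ)^k = (n:ℝ)^k * A := by ring
          _ ≤ (N.descFactorial k : ℝ) * A := u1
          _ ≤ 1 := u2
      have hfrac : 1 + (k:ℝ)/(n:ℝ) = (N:ℝ)/(n:ℝ) := by
        rw [hNr]; field_simp
      rw [hfrac, div_pow]
      calc (N:ℝ)^k * A ≤ (N:ℝ)^k * (1 / (n:ℝ)^k) :=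
            mul_le_mul_of_nonneg_left u3 (by positivity)
        _ = (N:ℝ)^k / (n:ℝ)^k := by ring
  refine tendsto_of_tendsto_of_tendsto_of_le_of_le'
    (g := fun n : ℕ => 1 - 2 * ((k:ℝ) * k) / ((n:ℝ) + k))
    (h := fun n : ℕ => (1 + (k:ℝ) / n) ^ k) ?_ ?_ ?_ ?_
  · have h1 : Tendsto (fun n : ℕ => ((n:ℝ) + (k:ℝ))) atTop atTop :=
      tendsto_atTop_add_const_right atTop (k:ℝ) tendsto_natCast_atTop_atTop
    have h2 : Tendsto (fun n : ℕ => 2 * ((k:ℝ) * k) / ((n:ℝ) + k)) atTop (nhds 0) :=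
      Tendsto.div_atTop tendsto_const_nhds h1
    simpa using tendsto_const_nhds.sub h2
  · have h3 : Tendsto (fun n : ℕ => (k:ℝ) / n) atTop (nhds 0) :=
      tendsto_const_div_atTop_nhds_zero_nat (k:ℝ)
    have h4 : Tendsto (fun n : ℕ => 1 + (k:ℝ) / n) atTop (nhds 1) := by
      simpa using tendsto_const_nhds.add h3
    simpa using h4.pow k
  · filter_upwards [eventually_ge_atTop 1] with n hn
    exact (key n hn).1
  · filter_upwards [eventually_ge_atTop 1] with n hn
    exact (key n hn).2
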